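/- Let β > 0 and α = β/9. Then for μ = 3/β² the cubic p_μ(λ) = αλ³ + λ² + βμλ + μ satisfies the identity p_μ(λ) = (β/9)(λ + 3/β)³ for all λ, so λ = −3/β (which equals −1/(3α)) is a real root of algebraic multiplicity three; and for every μ > 0 with μ ≠ 3/β², the cubic p_μ has exactly one real root and a pair of nonreal complex conjugate roots. -/

import Mathlib

open Polynomial

lemma aux_multiset (a b c : ℂ) (ha : a.im ≠ 0)
    (hconj : ({a,b,c} : Multiset ℂ).map (starRingEnd ℂ) = {a,b,c})
    (hsum : (a+b+c).im = 0) :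
    ∃ (x : ℝ) (z : ℂ), z.im ≠ 0 ∧ ({a,b,c} : Multiset ℂ) = {(x:ℂ), z, star z} := by
  have hmem : (starRingEnd ℂ) a ∈ ({a,b,c} : Multiset ℂ) := by
    rw [← hconj]
    exact Multiset.mem_map_of_mem _ (by simp)
  have hne : (starRingEnd ℂ) a ≠ a := fun h => ha (Complex.conj_eq_iff_im.mp h)
  simp only [Multiset.insert_eq_cons, Multiset.mem_cons, Multiset.mem_singleton] at hmem
  rcases hmem with h | h | h
  · exact absurd h hne
  · have hc : c.im = 0 := by
      have h1 := congrArg Complex.im h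
      simp at h1
      simp [Complex.add_im] at hsum
      linarith
    refine ⟨c.re, a, ha, ?_⟩
    have hc' : (c.re : ℂ) = c := Complex.ext (by simp) (by simp [hc])
    have hst : star a = b := h
    rw [hc', hst]
    show a ::ₘ b ::ₘ c ::ₘ 0 = c ::ₘ a ::ₘ b ::ₘ 0
    rw [Multiset.cons_swap b c, Multiset.cons_swap a c]
  · have hb : b.im = 0 := by
      have h1 := congrArg Complex.im h
      simp at h1
      simp [Complex.add_im] at hsum
      linarith
    refine ⟨b.re, a, ha, ?_⟩
    have hb' : (b.re : ℂ) = b := Complex.ext (by simp) (by simp [hb])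
    have hst : star a = c := h
    rw [hb', hst]
    show a ::ₘ b ::ₘ c ::ₘ 0 = b ::ₘ a ::ₘ c ::ₘ 0
    rw [Multiset.cons_swap a b]

lemma part4 (β : ℝ) (hβ : 0 < β) (α : ℝ) (hα : α = β / 9)
    (μ : ℝ) (hμ : 0 < μ) (hne : μ ≠ 3 / β ^ 2) :
    ∃ (x : ℝ) (z : ℂ), z.im ≠ 0 ∧
      (C (α : ℂ) * X ^ 3 + X ^ 2 + C ((β : ℂ) * (μ : ℂ)) * X + C (μ : ℂ)).roots =
        {(x : ℂ), z, star z} := by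
  have hαpos : 0 < α := by rw [hα]; positivity
  have hα0 : α ≠ 0 := ne_of_gt hαpos
  have hαC : (α : ℂ) ≠ 0 := by exact_mod_cast hα0
  set p : ℂ[X] := C (α : ℂ) * X ^ 3 + X ^ 2 + C ((β : ℂ) * (μ : ℂ)) * X + C (μ : ℂ) with hp
  have hdeg : p.natDegree = 3 := by
    have : p = C (α:ℂ) * X ^ 3 + C 1 * X ^ 2 + C ((β:ℂ)*(μ:ℂ)) * X + C (μ:ℂ) := by
      rw [hp]; ring_nf; simp
    rw [this]; exact natDegree_cubic hαC
  have hp0 : p ≠ 0 := fun h => by simp [h] at hdeg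
  have hsplits : Splits p := IsAlgClosed.splits p
  have hcard : Multiset.card p.roots = 3 := by
    have := hsplits.natDegree_eq_card_roots
    simpa [hdeg] using this.symm
  obtain ⟨a, b, c, habc⟩ := Multiset.card_eq_three.mp hcard
  have hlead : p.leadingCoeff = (α : ℂ) := by
    rw [leadingCoeff, hdeg, hp]
    simp [coeff_C]
  have hfact : p = C (α:ℂ) * ((X - C a) * ((X - C b) * (X - C c))) := by
    have := hsplits.eq_prod_roots
    rw [habc, hlead] at this
    simpa using this
  have heval : ∀ t : ℂ, (α:ℂ) * t^3 + t^2 + (β:ℂ)*(μ:ℂ)*t + (μ:ℂ)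
      = (α:ℂ) * ((t - a) * ((t - b) * (t - c))) := by
    intro t
    have := congrArg (eval t) hfact
    simpa [hp] using this
  have h0 := heval 0
  have h1 := heval 1
  have hm1 := heval (-1)
  have v1 : (α:ℂ) * (a + b + c) = -1 := by
    linear_combination ((1:ℂ)/2) * h1 + (1/2) * hm1 - h0
  have v2 : (α:ℂ) * (a*b + a*c + b*c) = (β:ℂ)*(μ:ℂ) := by
    linear_combination (-(1:ℂ)/2) * h1 + (1/2) * hm1
  have v3 : (α:ℂ) * (a*b*c) = -(μ:ℂ) := by linear_combination h0
  -- conjugation invariance of the roots multiset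
  have hmapp : p.map (starRingEnd ℂ) = p := by
    rw [hp]
    simp [Polynomial.map_add, Polynomial.map_mul, Polynomial.map_pow, map_C, map_X,
      Complex.conj_ofReal]
  have hconj : ({a,b,c} : Multiset ℂ).map (starRingEnd ℂ) = {a,b,c} := by
    rw [← habc, ← hsplits.roots_map (starRingEnd ℂ), hmapp]
  have hsum : (a + b + c).im = 0 := by
    have h := congrArg Complex.im v1
    simp [Complex.mul_im] at h
    rcases h with h | h
    · exact absurd h hα0
    · exact h
  -- real-root negativity helper
  have hroot_neg : ∀ t : ℝ, (α:ℂ) * (t:ℂ)^3 + (t:ℂ)^2 + (β:ℂ)*(μ:ℂ)*(t:ℂ) + (μ:ℂ) = 0 → t < 0 := by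
    intro t ht
    have htr : α * t^3 + t^2 + β*μ*t + μ = 0 := by exact_mod_cast ht
    by_contra hge
    push_neg at hge
    nlinarith [pow_le_pow_left₀ hge (le_refl t) 3, mul_nonneg (le_of_lt hαpos) (pow_nonneg hge 3),
      mul_nonneg (mul_nonneg hβ.le hμ.le) hge, sq_nonneg t]
  by_cases hai : a.im = 0
  · by_cases hbi : b.im = 0
    · by_cases hci : c.im = 0
      · -- all real: contradiction
        exfalso
        set x := a.re; set y := b.re; set z := c.re
        have ha' : a = (x:ℂ) := Complex.ext rfl (by simpa using hai)
        have hb' : b = (y:ℂ) := Complex.ext rfl (by simpa using hbi)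
        have hc' : c = (z:ℂ) := Complex.ext rfl (by simpa using hci)
        rw [ha', hb', hc'] at v1 v2 v3
        have v1r : α * (x + y + z) = -1 := by exact_mod_cast v1
        have v2r : α * (x*y + x*z + y*z) = β*μ := by exact_mod_cast v2
        have v3r : α * (x*y*z) = -μ := by exact_mod_cast v3
        have hβ0 : β ≠ 0 := ne_of_gt hβ
        have he1 : x + y + z = -9/β := by
          rw [hα] at v1r; field_simp at v1r ⊢; linarith
        have he2 : x*y + x*z + y*z = 9*μ := by
          rw [hα] at v2r; field_simp at v2r
          linear_combination v2r
        have he3 : x*y*z = -9*μ/β := by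
          rw [hα] at v3r; field_simp at v3r ⊢; linarith
        -- roots are negative
        have hx : x < 0 := by
          apply hroot_neg
          have : p.eval a = 0 := (mem_roots hp0).mp (by rw [habc]; simp)
          rw [hp, ha'] at this; simpa using this
        have hy : y < 0 := by
          apply hroot_neg
          have : p.eval b = 0 := (mem_roots hp0).mp (by rw [habc]; simp)
          rw [hp, hb'] at this; simpa using this
        have hz : z < 0 := by
          apply hroot_neg
          have : p.eval c = 0 := (mem_roots hp0).mp (by rw [habc]; simp)
          rw [hp, hc'] at this; simpa using this
        have hkey : (-x)*(y-z)^2 + (-y)*(x-z)^2 + (-z)*(x-y)^2 = 0 := by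
          linear_combination (-(x*y+x*z+y*z)) * he1 + (9/β) * he2 + 9 * he3
        have t1 : 0 ≤ (-x)*(y-z)^2 := mul_nonneg (by linarith) (sq_nonneg _)
        have t2 : 0 ≤ (-y)*(x-z)^2 := mul_nonneg (by linarith) (sq_nonneg _)
        have t3 : 0 ≤ (-z)*(x-y)^2 := mul_nonneg (by linarith) (sq_nonneg _)
        have e1 : (-x)*(y-z)^2 = 0 := le_antisymm (by linarith) t1
        have e3' : (-z)*(x-y)^2 = 0 := le_antisymm (by linarith) t3
        have hyz : y = z := by
          rcases mul_eq_zero.mp e1 with h | h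
          · exact absurd h (by linarith)
          · have := pow_eq_zero_iff (n := 2) (by norm_num) |>.mp h
            linarith
        have hxy : x = y := by
          rcases mul_eq_zero.mp e3' with h | h
          · exact absurd h (by linarith)
          · have := pow_eq_zero_iff (n := 2) (by norm_num) |>.mp h
            linarith
        rw [hxy, hyz] at he1 he2
        have hz3 : z * β = -3 := by field_simp at he1; linarith
        have h9 : (z*β)^2 = 9 := by rw [hz3]; norm_num
        have hz2 : z^2 = 3*μ := by linear_combination (1/3 : ℝ) * he2
        apply hne
        field_simp
        linear_combination (1/3 : ℝ) * h9 - (β^2/3) * hz2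
      · -- c.im ≠ 0
        have hperm : ({a,b,c} : Multiset ℂ) = {c,a,b} := by
          show a ::ₘ b ::ₘ c ::ₘ 0 = c ::ₘ a ::ₘ b ::ₘ 0
          rw [Multiset.cons_swap b c, Multiset.cons_swap a c]
        obtain ⟨x, w, hw, hmul⟩ := aux_multiset c a b hci (by rw [← hperm]; exact hconj)
          (by have : c + a + b = a + b + c := by ring
              rw [this]; exact hsum)
        exact ⟨x, w, hw, by rw [habc, hperm, hmul]⟩
    · -- b.im ≠ 0
      have hperm : ({a,b,c} : Multiset ℂ) = {b,a,c} := by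
        show a ::ₘ b ::ₘ c ::ₘ 0 = b ::ₘ a ::ₘ c ::ₘ 0
        rw [Multiset.cons_swap a b]
      obtain ⟨x, w, hw, hmul⟩ := aux_multiset b a c hbi (by rw [← hperm]; exact hconj)
        (by have : b + a + c = a + b + c := by ring
            rw [this]; exact hsum)
      exact ⟨x, w, hw, by rw [habc, hperm, hmul]⟩
  · obtain ⟨x, w, hw, hmul⟩ := aux_multiset a b c hai hconj hsum
    exact ⟨x, w, hw, by rw [habc, hmul]⟩

/-- Let `β > 0` and `α = β/9`. For `μ = 3/β²` the cubic
`αλ³ + λ² + βμλ + μ` equals `(β/9)(λ + 3/β)³`, so `λ = −3/β = −1/(3α)` is a real root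
of algebraic multiplicity three; and for every `μ > 0` with `μ ≠ 3/β²` the cubic has
exactly one real root and a pair of nonreal complex conjugate roots. -/
theorem stmt_4 (β : ℝ) (hβ : 0 < β) (α : ℝ) (hα : α = β / 9) :
    (∀ l : ℂ, (α : ℂ) * l ^ 3 + l ^ 2 + (β : ℂ) * ((3 / β ^ 2 : ℝ) : ℂ) * l
        + ((3 / β ^ 2 : ℝ) : ℂ) = ((β : ℂ) / 9) * (l + 3 / (β : ℂ)) ^ 3) ∧
    (-3 / β = -1 / (3 * α)) ∧
    (C (α : ℂ) * X ^ 3 + X ^ 2 + C ((β : ℂ) * ((3 / β ^ 2 : ℝ) : ℂ)) * X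
        + C ((3 / β ^ 2 : ℝ) : ℂ)).roots =
      {((-3 / β : ℝ) : ℂ), ((-3 / β : ℝ) : ℂ), ((-3 / β : ℝ) : ℂ)} ∧
    (∀ μ : ℝ, 0 < μ → μ ≠ 3 / β ^ 2 →
      ∃ (x : ℝ) (z : ℂ), z.im ≠ 0 ∧
        (C (α : ℂ) * X ^ 3 + X ^ 2 + C ((β : ℂ) * (μ : ℂ)) * X + C (μ : ℂ)).roots =
          {(x : ℂ), z, star z}) := by
  have hβ0 : β ≠ 0 := ne_of_gt hβ
  have hβC : (β : ℂ) ≠ 0 := by exact_mod_cast hβ0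
  have h1 : ∀ l : ℂ, (α : ℂ) * l ^ 3 + l ^ 2 + (β : ℂ) * ((3 / β ^ 2 : ℝ) : ℂ) * l
      + ((3 / β ^ 2 : ℝ) : ℂ) = ((β : ℂ) / 9) * (l + 3 / (β : ℂ)) ^ 3 := by
    intro l
    rw [hα]
    push_cast
    field_simp
    ring
  refine ⟨h1, by rw [hα]; field_simp; ring, ?_, fun μ hμ hne => part4 β hβ α hα μ hμ hne⟩
  have hfact : C (α : ℂ) * X ^ 3 + X ^ 2 + C ((β : ℂ) * ((3 / β ^ 2 : ℝ) : ℂ)) * X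
      + C ((3 / β ^ 2 : ℝ) : ℂ) = C ((β:ℂ)/9) * (X - C (-(3/(β:ℂ))))^3 := by
    apply Polynomial.funext
    intro r
    have := h1 r
    simp only [eval_add, eval_mul, eval_pow, eval_C, eval_X, eval_sub, eval_neg]
    rw [this]
    ring
  rw [hfact, roots_C_mul _ (by simp [hβC] : ((β:ℂ)/9) ≠ 0), roots_pow, roots_X_sub_C]
  have : ((-3 / β : ℝ) : ℂ) = -(3/(β:ℂ)) := by push_cast; ring
  rw [this]
  rfl
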